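/- Menger's theorem for digraphs: for vertex sets A and B in a digraph G and a positive integer k, either G contains k pairwise vertex-disjoint directed paths from A to B, or there is a set S of fewer than k vertices such that every directed path from A to B meets S. -/

import Mathlib

variable {V : Type}

/-- `w` is a directed walk of length `n` in the digraph with edge relation `R`. -/
def IsWalkOn (R : V → V → Prop) (w : ℕ → V) (n : ℕ) : Prop :=
  ∀ i < n, R (w i) (w (i + 1))

/-- The set of vertices used by the walk `w` of length `n`. -/
def walkVerts (w : ℕ → V) (n : ℕ) : Set V :=
  {v | ∃ i ≤ n, w i = v}

/-- The set of directed edges used by the walk `w` of length `n`. -/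
def walkEdges (w : ℕ → V) (n : ℕ) : Set (V × V) :=
  {e | ∃ i < n, w i = e.1 ∧ w (i + 1) = e.2}

/-- A directed path: a walk with no repeated vertices. -/
def IsPathOn (R : V → V → Prop) (w : ℕ → V) (n : ℕ) : Prop :=
  IsWalkOn R w n ∧ ∀ i ≤ n, ∀ j ≤ n, w i = w j → i = j

/-- A directed cycle of length `n`: a closed walk with no repeated vertices
except that the last vertex equals the first. -/
def IsCycleOn (R : V → V → Prop) (w : ℕ → V) (n : ℕ) : Prop :=
  0 < n ∧ IsWalkOn R w n ∧ w n = w 0 ∧ ∀ i < n, ∀ j < n, w i = w j → i = j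

/-- `v` is reachable from `u` by a directed walk all of whose vertices lie in `S`. -/
def ReachIn (R : V → V → Prop) (S : Set V) (u v : V) : Prop :=
  ∃ w n, IsWalkOn R w n ∧ w 0 = u ∧ w n = v ∧ ∀ i ≤ n, w i ∈ S

/-- Every two vertices of `C` are mutually reachable inside `S`. -/
def StrongIn (R : V → V → Prop) (S C : Set V) : Prop :=
  ∀ u ∈ C, ∀ v ∈ C, ReachIn R S u v

/-- `C` is a strongly connected component of the subgraph induced on `S`. -/
def IsSCCOf (R : V → V → Prop) (S C : Set V) : Prop :=
  C.Nonempty ∧ C ⊆ S ∧ StrongIn R S C ∧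
    ∀ C', C ⊆ C' → C' ⊆ S → StrongIn R S C' → C' = C

/-- A directed `X`-walk: endpoints in `X`, all internal vertices outside `X`. -/
def IsXWalk (R : V → V → Prop) (X : Set V) (w : ℕ → V) (n : ℕ) : Prop :=
  IsWalkOn R w n ∧ w 0 ∈ X ∧ w n ∈ X ∧ ∀ i, 0 < i → i < n → w i ∉ X

/-- `S` meets every directed odd cycle. -/
def HitsOdd (R : V → V → Prop) (S : Set V) : Prop :=
  ∀ c m, IsCycleOn R c m → Odd m → ∃ i < m, c i ∈ S

/-- `S` meets every directed odd cycle of the subgraph induced on `W`. -/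
def HitsOddIn (R : V → V → Prop) (S W : Set V) : Prop :=
  ∀ c m, IsCycleOn R c m → Odd m → walkVerts c m ⊆ W → ∃ i < m, c i ∈ S

/-- A half-integral packing of `k` directed odd cycles: every vertex lies in at most
two of the `k` cycles. -/
def HalfPackOdd (R : V → V → Prop) (k : ℕ) : Prop :=
  ∃ (c : Fin k → ℕ → V) (len : Fin k → ℕ),
    (∀ i, IsCycleOn R (c i) (len i) ∧ Odd (len i)) ∧
    ∀ v, {i | v ∈ walkVerts (c i) (len i)}.ncard ≤ 2

/-- A linkage of order `s` from `A` to `B` avoiding `Z`: `s` pairwise vertex-disjoint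
directed paths from `A` to `B`, none of which meets `Z`. -/
def ExLinkage (R : V → V → Prop) (A B Z : Set V) (s : ℕ) : Prop :=
  ∃ (P : Fin s → ℕ → V) (len : Fin s → ℕ),
    (∀ i, IsPathOn R (P i) (len i) ∧ P i 0 ∈ A ∧ P i (len i) ∈ B ∧
      Disjoint (walkVerts (P i) (len i)) Z) ∧
    ∀ i j, i ≠ j → Disjoint (walkVerts (P i) (len i)) (walkVerts (P j) (len j))

/-- `T` is `r`-well-linked: for all disjoint equal-size subsets `A, B ⊆ T` of size at
least `r`, there are linkages of order `|A|` from `A` to `B` and from `B` to `A` in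
`G - (T \ (A ∪ B))`. -/
def WellLinked (R : V → V → Prop) (T : Finset V) (r : ℕ) : Prop :=
  ∀ A B : Finset V, A ⊆ T → B ⊆ T → Disjoint A B → A.card = B.card → r ≤ A.card →
    ExLinkage R (↑A) (↑B) ((↑T : Set V) \ (↑A ∪ ↑B)) A.card ∧
    ExLinkage R (↑B) (↑A) ((↑T : Set V) \ (↑A ∪ ↑B)) A.card

/-- `S` is `k`-linked: for every vertex set `X` with `|X| < k`, there is a unique
strongly connected component of `G - X` containing more than half of the vertices
of `S`. -/
def KLinked (R : V → V → Prop) (S : Finset V) (k : ℕ) : Prop :=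
  ∀ X : Finset V, X.card < k →
    ∃! C : Set V, IsSCCOf R ((↑X : Set V)ᶜ) C ∧ S.card < 2 * ((↑S : Set V) ∩ C).ncard

/-- A bramble: a family of (vertex sets of) strongly connected subgraphs which
pairwise either intersect or are joined by edges in both directions. -/
def IsBramble (R : V → V → Prop) (B : Set (Set V)) : Prop :=
  (∀ C ∈ B, C.Nonempty ∧ StrongIn R C C) ∧
  ∀ C₁ ∈ B, ∀ C₂ ∈ B, (C₁ ∩ C₂).Nonempty ∨
    ((∃ u ∈ C₁, ∃ v ∈ C₂, R u v) ∧ (∃ u ∈ C₂, ∃ v ∈ C₁, R u v))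

/-- A walk in the underlying undirected graph of the digraph with edge relation `R`. -/
def IsUWalkOn (R : V → V → Prop) (w : ℕ → V) (n : ℕ) : Prop :=
  ∀ i < n, R (w i) (w (i + 1)) ∨ R (w (i + 1)) (w i)

/-- A separation `(C, D)` of a digraph: `C ∪ D = V` and there is no edge from
`C \ D` to `D \ C`. -/
def IsSeparation (R : V → V → Prop) (C D : Set V) : Prop :=
  C ∪ D = Set.univ ∧ ∀ u ∈ C \ D, ∀ v ∈ D \ C, ¬ R u v

section MengerHelpers

open Classical

/-- A set `S` separates `A` from `B` (every directed `A`–`B` path meets `S`). -/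
def MSep (R : V → V → Prop) (A B S : Set V) : Prop :=
  ∀ w n, IsPathOn R w n → w 0 ∈ A → w n ∈ B → ∃ i ≤ n, w i ∈ S

/-- `k` pairwise vertex-disjoint directed `A`–`B` paths exist. -/
def MDisjPaths (R : V → V → Prop) (A B : Set V) (k : ℕ) : Prop :=
  ∃ (P : Fin k → ℕ → V) (len : Fin k → ℕ),
    (∀ i, IsPathOn R (P i) (len i) ∧ P i 0 ∈ A ∧ P i (len i) ∈ B) ∧
    ∀ i j, i ≠ j → Disjoint (walkVerts (P i) (len i)) (walkVerts (P j) (len j))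

lemma mem_walkVerts {w : ℕ → V} {n i : ℕ} (h : i ≤ n) : w i ∈ walkVerts w n :=
  ⟨i, h, rfl⟩

lemma walkVerts_mono {w : ℕ → V} {m n : ℕ} (h : m ≤ n) :
    walkVerts w m ⊆ walkVerts w n := by
  rintro v ⟨i, hi, rfl⟩; exact ⟨i, le_trans hi h, rfl⟩

lemma IsPathOn.prefix {R : V → V → Prop} {w : ℕ → V} {n : ℕ}
    (h : IsPathOn R w n) {m : ℕ} (hm : m ≤ n) : IsPathOn R w m :=
  ⟨fun i hi => h.1 i (lt_of_lt_of_le hi hm),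
   fun i hi j hj => h.2 i (le_trans hi hm) j (le_trans hj hm)⟩

lemma IsPathOn.suffix {R : V → V → Prop} {w : ℕ → V} {n : ℕ}
    (h : IsPathOn R w n) {m : ℕ} (hm : m ≤ n) :
    IsPathOn R (fun t => w (t + m)) (n - m) := by
  constructor
  · intro i hi
    have : i + m < n := by omega
    have := h.1 (i + m) this
    simpa [show i + 1 + m = i + m + 1 by omega] using this
  · intro i hi j hj heq
    have := h.2 (i + m) (by omega) (j + m) (by omega) heq
    omega

/-- Every walk contains a path with the same endpoints. -/
lemma walk_to_path {R : V → V → Prop} :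
    ∀ n (w : ℕ → V), IsWalkOn R w n →
    ∃ w' n', IsPathOn R w' n' ∧ w' 0 = w 0 ∧ w' n' = w n ∧
      walkVerts w' n' ⊆ walkVerts w n := by
  intro n
  induction n using Nat.strong_induction_on with
  | _ n ih =>
    intro w hw
    by_cases hinj : ∀ i ≤ n, ∀ j ≤ n, w i = w j → i = j
    · exact ⟨w, n, ⟨hw, hinj⟩, rfl, rfl, fun v hv => hv⟩
    · push_neg at hinj
      obtain ⟨a, ha, b, hb, heq, hne⟩ := hinj
      obtain ⟨i, j, hij, hi, hj, hweq⟩ :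
          ∃ i j, i < j ∧ i ≤ n ∧ j ≤ n ∧ w i = w j := by
        rcases Nat.lt_or_ge a b with h | h
        · exact ⟨a, b, h, ha, hb, heq⟩
        · exact ⟨b, a, by omega, hb, ha, heq.symm⟩
      set w2 : ℕ → V := fun t => if t ≤ i then w t else w (t + (j - i)) with hw2
      set n2 : ℕ := n - (j - i) with hn2
      have hn2lt : n2 < n := by omega
      have hwalk2 : IsWalkOn R w2 n2 := by
        intro t ht
        rcases Nat.lt_trichotomy t i with h | h | h
        · have e1 : w2 t = w t := by simp [hw2, (show t ≤ i by omega)]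
          have e2 : w2 (t + 1) = w (t + 1) := by simp [hw2, (show t + 1 ≤ i by omega)]
          rw [e1, e2]; exact hw t (by omega)
        · subst h
          have e1 : w2 t = w t := by simp [hw2]
          have e2 : w2 (t + 1) = w (j + 1) := by
            simp only [hw2]
            rw [if_neg (by omega)]
            congr 1; omega
          rw [e1, e2, hweq]
          exact hw j (by omega)
        · have e1 : w2 t = w (t + (j - i)) := by simp [hw2, (show ¬ t ≤ i by omega)]
          have e2 : w2 (t + 1) = w (t + (j - i) + 1) := by
            simp only [hw2]
            rw [if_neg (by omega)]
            congr 1; omega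
          rw [e1, e2]
          exact hw (t + (j - i)) (by omega)
      have h0 : w2 0 = w 0 := by simp [hw2]
      have hlast : w2 n2 = w n := by
        by_cases h : n2 ≤ i
        · have hji : j = n := by omega
          have hni : n2 = i := by omega
          rw [hni]
          show (if i ≤ i then w i else w (i + (j - i))) = w n
          rw [if_pos (le_refl i), hweq, hji]
        · simp only [hw2, if_neg h]
          congr 1; omega
      have hsub : walkVerts w2 n2 ⊆ walkVerts w n := by
        rintro v ⟨t, ht, rfl⟩
        by_cases h : t ≤ i
        · exact ⟨t, by omega, by simp [hw2, h]⟩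
        · exact ⟨t + (j - i), by omega, by simp [hw2, h]⟩
      obtain ⟨w', n', hp, h0', hl', hs'⟩ := ih n2 hn2lt w2 hwalk2
      exact ⟨w', n', hp, h0'.trans h0, hl'.trans hlast, hs'.trans hsub⟩

lemma MSep.walk {R : V → V → Prop} {A B S : Set V} (hS : MSep R A B S)
    {w : ℕ → V} {n : ℕ} (hw : IsWalkOn R w n) (ha : w 0 ∈ A) (hb : w n ∈ B) :
    ∃ i ≤ n, w i ∈ S := by
  obtain ⟨w', n', hp, h0, hl, hsub⟩ := walk_to_path n w hw
  obtain ⟨i, hi, hmem⟩ := hS w' n' hp (h0 ▸ ha) (hl ▸ hb)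
  obtain ⟨t, ht, hteq⟩ := hsub (mem_walkVerts hi)
  exact ⟨t, ht, hteq ▸ hmem⟩

/-- Concatenation of walks. -/
def catW (w1 : ℕ → V) (n1 : ℕ) (w2 : ℕ → V) : ℕ → V :=
  fun t => if t ≤ n1 then w1 t else w2 (t - n1)

lemma catW_walk {R : V → V → Prop} {w1 w2 : ℕ → V} {n1 n2 : ℕ}
    (h1 : IsWalkOn R w1 n1) (h2 : IsWalkOn R w2 n2) (hj : w2 0 = w1 n1) :
    IsWalkOn R (catW w1 n1 w2) (n1 + n2) := by
  intro t ht
  rcases Nat.lt_trichotomy t n1 with h | h | h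
  · have e1 : catW w1 n1 w2 t = w1 t := by simp [catW, (show t ≤ n1 by omega)]
    have e2 : catW w1 n1 w2 (t + 1) = w1 (t + 1) := by simp [catW, (show t + 1 ≤ n1 by omega)]
    rw [e1, e2]; exact h1 t h
  · subst h
    have e1 : catW w1 t w2 t = w1 t := by simp [catW]
    have e2 : catW w1 t w2 (t + 1) = w2 1 := by
      simp only [catW]; rw [if_neg (by omega)]; congr 1; omega
    rw [e1, e2, ← hj]
    exact h2 0 (by omega)
  · have e1 : catW w1 n1 w2 t = w2 (t - n1) := by simp [catW, (show ¬ t ≤ n1 by omega)]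
    have e2 : catW w1 n1 w2 (t + 1) = w2 (t - n1 + 1) := by
      simp only [catW]; rw [if_neg (by omega)]; congr 1; omega
    rw [e1, e2]
    exact h2 (t - n1) (by omega)

lemma catW_zero {w1 : ℕ → V} {n1 : ℕ} {w2 : ℕ → V} : catW w1 n1 w2 0 = w1 0 := by
  simp [catW]

lemma catW_last {w1 : ℕ → V} {n1 n2 : ℕ} {w2 : ℕ → V} (hj : w2 0 = w1 n1) :
    catW w1 n1 w2 (n1 + n2) = w2 n2 := by
  rcases Nat.eq_zero_or_pos n2 with h | h
  · subst h; simpa [catW] using hj.symm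
  · simp only [catW]; rw [if_neg (by omega)]; congr 1; omega

lemma catW_verts {w1 : ℕ → V} {n1 n2 : ℕ} {w2 : ℕ → V} :
    walkVerts (catW w1 n1 w2) (n1 + n2) ⊆ walkVerts w1 n1 ∪ walkVerts w2 n2 := by
  rintro v ⟨t, ht, rfl⟩
  by_cases h : t ≤ n1
  · exact Or.inl ⟨t, h, by simp [catW, h]⟩
  · exact Or.inr ⟨t - n1, by omega, by simp [catW, h]⟩

/-- Prepending a vertex to a walk. -/
def consW (x : V) (w : ℕ → V) : ℕ → V :=
  fun t => if t = 0 then x else w (t - 1)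

lemma consW_walk {R : V → V → Prop} {x : V} {w : ℕ → V} {n : ℕ}
    (hx : R x (w 0)) (h : IsWalkOn R w n) : IsWalkOn R (consW x w) (n + 1) := by
  intro t ht
  rcases Nat.eq_zero_or_pos t with h0 | h0
  · subst h0; simpa [consW] using hx
  · have e1 : consW x w t = w (t - 1) := by simp [consW, (show t ≠ 0 by omega)]
    have e2 : consW x w (t + 1) = w (t - 1 + 1) := by
      simp only [consW]; rw [if_neg (by omega)]; congr 1; omega
    rw [e1, e2]
    exact h (t - 1) (by omega)

lemma consW_zero {x : V} {w : ℕ → V} : consW x w 0 = x := by simp [consW]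

lemma consW_succ {x : V} {w : ℕ → V} {t : ℕ} : consW x w (t + 1) = w t := by
  simp [consW]

lemma consW_verts {x : V} {w : ℕ → V} {n : ℕ} :
    walkVerts (consW x w) (n + 1) ⊆ insert x (walkVerts w n) := by
  rintro v ⟨t, ht, rfl⟩
  rcases Nat.eq_zero_or_pos t with h0 | h0
  · subst h0; simp [consW]
  · exact Or.inr ⟨t - 1, by omega, by simp [consW, (show t ≠ 0 by omega)]⟩

/-- Number of non-loop edges. -/
noncomputable def edgeCard [Fintype V] (R : V → V → Prop) : ℕ :=
  (Finset.univ.filter (fun p : V × V => R p.1 p.2 ∧ p.1 ≠ p.2)).card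

lemma edgeCard_eq_zero [Fintype V] {R : V → V → Prop} (h : edgeCard R = 0) :
    ∀ u v, R u v → u = v := by
  intro u v huv
  by_contra hne
  have hmem : (u, v) ∈ Finset.univ.filter (fun p : V × V => R p.1 p.2 ∧ p.1 ≠ p.2) := by
    simp [huv, hne]
  have := Finset.card_eq_zero.mp h
  rw [this] at hmem
  simp at hmem

lemma edgeCard_lt [Fintype V] {R : V → V → Prop} {x y : V}
    (hR : R x y) (hxy : x ≠ y) :
    edgeCard (fun u v => R u v ∧ ¬(u = x ∧ v = y)) < edgeCard R := by
  apply Finset.card_lt_card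
  rw [Finset.ssubset_iff_of_subset]
  · refine ⟨(x, y), by simp [hR, hxy], by simp⟩
  · intro p hp
    simp only [Finset.mem_filter, Finset.mem_univ, true_and] at hp ⊢
    exact ⟨hp.1.1, hp.2⟩

/-- The base case: if all edges are loops. -/
lemma menger_base [Fintype V] {R : V → V → Prop} {A B : Set V} {k : ℕ}
    (hloop : ∀ u v, R u v → u = v)
    (hsep : ∀ S : Set V, MSep R A B S → k ≤ S.ncard) :
    MDisjPaths R A B k := by
  have hsepAB : MSep R A B (A ∩ B) := by
    intro w n hp ha hb
    have hn : n = 0 := by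
      by_contra h
      have h1 : R (w 0) (w 1) := hp.1 0 (by omega)
      have h2 := hloop _ _ h1
      have := hp.2 0 (by omega) 1 (by omega) h2
      omega
    subst hn
    exact ⟨0, le_refl 0, ha, hb⟩
  have hk := hsep _ hsepAB
  have hfin : (A ∩ B).Finite := Set.toFinite _
  have hk' : k ≤ hfin.toFinset.card := by
    rwa [Set.ncard_eq_toFinset_card _ hfin] at hk
  obtain ⟨t, hts, htc⟩ := Finset.exists_subset_card_eq hk'
  set f : Fin k → V := fun i => ((t.equivFin.symm (Fin.cast htc.symm i)) : V) with hf
  have hfmem : ∀ i, f i ∈ A ∩ B := by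
    intro i
    have h1 : f i ∈ t := (t.equivFin.symm (Fin.cast htc.symm i)).2
    have h2 := hts h1
    rwa [Set.Finite.mem_toFinset] at h2
  have hfinj : Function.Injective f := by
    intro i j h
    have h1 := t.equivFin.symm.injective (Subtype.coe_injective h)
    have h2 := congrArg Fin.val h1
    simp only [Fin.coe_cast] at h2
    exact Fin.ext h2
  refine ⟨fun i _ => f i, fun _ => 0, ?_, ?_⟩
  · intro i
    refine ⟨⟨fun r hr => absurd hr (Nat.not_lt_zero r), fun a ha b hb _ => ?_⟩,
      (hfmem i).1, (hfmem i).2⟩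
    have ha' : a = 0 := Nat.le_zero.mp ha
    have hb' : b = 0 := Nat.le_zero.mp hb
    rw [ha', hb']
  · intro i j hij
    rw [Set.disjoint_left]
    rintro v ⟨a, ha, rfl⟩ ⟨b, hb, hbv⟩
    exact hij (hfinj hbv).symm

end MengerHelpers

section MengerCore

lemma menger_core [Fintype V] :
    ∀ (N : ℕ) (R : V → V → Prop) (A B : Set V) (k : ℕ),
      edgeCard R ≤ N → (∀ S : Set V, MSep R A B S → k ≤ S.ncard) →
      MDisjPaths R A B k := by
  intro N
  induction N using Nat.strong_induction_on with
  | _ N ih =>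
    intro R A B k hcard hsep
    by_cases hE : ∃ x y, R x y ∧ x ≠ y
    swap
    · push_neg at hE
      exact menger_base (fun u v h => hE u v h) hsep
    obtain ⟨x, y, hRxy, hxy⟩ := hE
    set R' : V → V → Prop := fun u v => R u v ∧ ¬(u = x ∧ v = y) with hR'def
    have hcard' : edgeCard R' < N := lt_of_lt_of_le (edgeCard_lt hRxy hxy) hcard
    have hR'le : ∀ u v, R' u v → R u v := fun u v h => h.1
    have key : ∀ (A' B' : Set V), (∀ S : Set V, MSep R' A' B' S → k ≤ S.ncard) →
        MDisjPaths R' A' B' k :=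
      fun A' B' h => ih (edgeCard R') hcard' R' A' B' k le_rfl h
    have conv : ∀ {A' B' : Set V}, MDisjPaths R' A' B' k → MDisjPaths R A' B' k := by
      rintro A' B' ⟨P, len, h1, h2⟩
      exact ⟨P, len, fun i => ⟨⟨fun t ht => ((h1 i).1.1 t ht).1, (h1 i).1.2⟩,
        (h1 i).2.1, (h1 i).2.2⟩, h2⟩
    by_cases hY : ∃ Y : Set V, MSep R' A B Y ∧ Y.ncard < k
    swap
    · push_neg at hY
      exact conv (key A B (fun S hS => hY S hS))
    obtain ⟨Y, hYsep, hYlt⟩ := hY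
    set T : Set V := insert x Y with hTdef
    set T' : Set V := insert y Y with hT'def
    -- every R-path either avoids the edge (x,y) or uses it
    have split : ∀ (w : ℕ → V) (n : ℕ), IsPathOn R w n →
        IsPathOn R' w n ∨ ∃ i < n, w i = x ∧ w (i + 1) = y := by
      intro w n hp
      by_cases h : ∃ i < n, w i = x ∧ w (i + 1) = y
      · exact Or.inr h
      · push_neg at h
        exact Or.inl ⟨fun i hi => ⟨hp.1 i hi, fun hc => h i hi hc.1 hc.2⟩, hp.2⟩
    have hTsep : MSep R A B T := by
      intro w n hp ha hb
      rcases split w n hp with h | ⟨i, hi, hx, -⟩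
      · obtain ⟨i, hin, hiY⟩ := hYsep w n h ha hb
        exact ⟨i, hin, Or.inr hiY⟩
      · exact ⟨i, by omega, by rw [hx]; exact Set.mem_insert _ _⟩
    have hT'sep : MSep R A B T' := by
      intro w n hp ha hb
      rcases split w n hp with h | ⟨i, hi, -, hy⟩
      · obtain ⟨i, hin, hiY⟩ := hYsep w n h ha hb
        exact ⟨i, hin, Or.inr hiY⟩
      · exact ⟨i + 1, by omega, by rw [hy]; exact Set.mem_insert _ _⟩
    have hkT := hsep T hTsep
    have hkT' := hsep T' hT'sep
    have hxY : x ∉ Y := by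
      intro hx
      have hTY : T = Y := by rw [hTdef]; exact Set.insert_eq_self.mpr hx
      rw [hTY] at hkT
      omega
    have hyY : y ∉ Y := by
      intro hy
      have hTY : T' = Y := by rw [hT'def]; exact Set.insert_eq_self.mpr hy
      rw [hTY] at hkT'
      omega
    have hTcard : T.ncard = k := by
      refine le_antisymm ?_ hkT
      have h1 := Set.ncard_insert_le x Y
      rw [hTdef]
      omega
    have hT'card : T'.ncard = k := by
      refine le_antisymm ?_ hkT'
      have h1 := Set.ncard_insert_le y Y
      rw [hT'def]
      omega
    -- Claim 2: A–T separators in R' have size ≥ k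
    have hsep2 : ∀ Z : Set V, MSep R' A T Z → k ≤ Z.ncard := by
      intro Z hZ
      apply hsep
      intro w n hp ha hb
      rcases split w n hp with h | ⟨i, hi, hx, -⟩
      · obtain ⟨j, hj, hjY⟩ := hYsep w n h ha hb
        obtain ⟨r, hr, hrZ⟩ := hZ w j (h.prefix hj) ha (Or.inr hjY)
        exact ⟨r, by omega, hrZ⟩
      · have hpre : IsPathOn R' w i := by
          refine ⟨fun j hji => ?_, fun a ha' b hb' => hp.2 a (by omega) b (by omega)⟩
          refine ⟨hp.1 j (by omega), fun hc => ?_⟩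
          have := hp.2 j (by omega) i (by omega) (hc.1.trans hx.symm)
          omega
        obtain ⟨r, hr, hrZ⟩ := hZ w i hpre ha (by rw [hx]; exact Set.mem_insert _ _)
        exact ⟨r, by omega, hrZ⟩
    -- Claim 3: T'–B separators in R' have size ≥ k
    have hsep3 : ∀ Z : Set V, MSep R' T' B Z → k ≤ Z.ncard := by
      intro Z hZ
      apply hsep
      intro w n hp ha hb
      rcases split w n hp with h | ⟨i, hi, hx, hy⟩
      · obtain ⟨j, hj, hjY⟩ := hYsep w n h ha hb
        obtain ⟨r, hr, hrZ⟩ := hZ (fun t => w (t + j)) (n - j) (h.suffix hj)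
          (show w (0 + j) ∈ T' by rw [Nat.zero_add, hT'def]; exact Set.mem_insert_iff.mpr (Or.inr hjY))
          (show w (n - j + j) ∈ B by rw [show n - j + j = n by omega]; exact hb)
        exact ⟨r + j, by omega, hrZ⟩
      · have hsuf : IsPathOn R' (fun t => w (t + (i + 1))) (n - (i + 1)) := by
          have hbase := hp.suffix (show i + 1 ≤ n by omega)
          refine ⟨fun r hr => ⟨hbase.1 r hr, fun hc => ?_⟩, hbase.2⟩
          have := hp.2 (r + (i + 1)) (by omega) i (by omega) (hc.1.trans hx.symm)
          omega
        obtain ⟨r, hr, hrZ⟩ := hZ _ _ hsuf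
          (show w (0 + (i + 1)) ∈ T' by
            rw [show 0 + (i + 1) = i + 1 by omega, hy, hT'def]
            exact Set.mem_insert _ _)
          (show w (n - (i + 1) + (i + 1)) ∈ B by
            rw [show n - (i + 1) + (i + 1) = n by omega]; exact hb)
        exact ⟨r + (i + 1), by omega, hrZ⟩
    -- obtain the two linkages
    obtain ⟨P, lenP, hP1, hP2⟩ := key A T hsep2
    obtain ⟨Q, lenQ, hQ1, hQ2⟩ := key T' B hsep3
    classical
    -- truncate P at first hit of T
    have hex : ∀ i : Fin k, ∃ t, P i t ∈ T ∧ t ≤ lenP i :=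
      fun i => ⟨lenP i, (hP1 i).2.2, le_rfl⟩
    set m : Fin k → ℕ := fun i => Nat.find (hex i) with hmdef
    have hm_mem : ∀ i, P i (m i) ∈ T := fun i => (Nat.find_spec (hex i)).1
    have hm_le : ∀ i, m i ≤ lenP i := fun i => (Nat.find_spec (hex i)).2
    have hm_min : ∀ i, ∀ t < m i, P i t ∉ T := by
      intro i t ht hmem
      exact Nat.find_min (hex i) ht ⟨hmem, by have := hm_le i; omega⟩
    have hPpath : ∀ i, IsPathOn R' (P i) (m i) := fun i => (hP1 i).1.prefix (hm_le i)
    -- truncate Q at last hit of T'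
    set t0 : Fin k → ℕ := fun j => Nat.findGreatest (fun t => Q j t ∈ T') (lenQ j)
      with ht0def
    have ht0_le : ∀ j, t0 j ≤ lenQ j := fun j => Nat.findGreatest_le _
    set Q2 : Fin k → ℕ → V := fun j t => Q j (t + t0 j) with hQ2def
    set n2 : Fin k → ℕ := fun j => lenQ j - t0 j with hn2def
    have hq0 : ∀ j, Q2 j 0 ∈ T' := by
      intro j
      have h1 : Q j (Nat.findGreatest (fun t => Q j t ∈ T') (lenQ j)) ∈ T' :=
        Nat.findGreatest_spec (P := fun t => Q j t ∈ T') (Nat.zero_le _) ((hQ1 j).2.1)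
      show Q j (0 + t0 j) ∈ T'
      rw [Nat.zero_add, ht0def]
      exact h1
    have hq_after : ∀ j, ∀ t, 0 < t → t ≤ n2 j → Q2 j t ∉ T' := by
      intro j t h1 h2 hmem
      have := ht0_le j
      exact Nat.findGreatest_is_greatest (show t0 j < t + t0 j by omega)
        (by simp only [hn2def] at h2; omega) hmem
    have hQpath : ∀ j, IsPathOn R' (Q2 j) (n2 j) := fun j => (hQ1 j).1.suffix (ht0_le j)
    have hqB : ∀ j, Q2 j (n2 j) ∈ B := by
      intro j
      have := ht0_le j
      simp only [hQ2def, hn2def]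
      rw [show lenQ j - t0 j + t0 j = lenQ j by omega]
      exact (hQ1 j).2.2
    have hPsub : ∀ i, walkVerts (P i) (m i) ⊆ walkVerts (P i) (lenP i) :=
      fun i => walkVerts_mono (hm_le i)
    have hQsub : ∀ j, walkVerts (Q2 j) (n2 j) ⊆ walkVerts (Q j) (lenQ j) := by
      rintro j v ⟨t, ht, rfl⟩
      exact ⟨t + t0 j, by have := ht0_le j; simp only [hn2def] at ht; omega, rfl⟩
    have hP2' : ∀ i j : Fin k, i ≠ j →
        Disjoint (walkVerts (P i) (m i)) (walkVerts (P j) (m j)) :=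
      fun i j hij => (hP2 i j hij).mono (hPsub i) (hPsub j)
    have hQ2' : ∀ i j : Fin k, i ≠ j →
        Disjoint (walkVerts (Q2 i) (n2 i)) (walkVerts (Q2 j) (n2 j)) :=
      fun i j hij => (hQ2 i j hij).mono (hQsub i) (hQsub j)
    -- endpoints
    set pe : Fin k → V := fun i => P i (m i) with hpedef
    set qe : Fin k → V := fun j => Q2 j 0 with hqedef
    have hpe_inj : Function.Injective pe := by
      intro i j h
      by_contra hij
      have h1 : pe i ∈ walkVerts (P i) (m i) := mem_walkVerts (le_refl (m i))
      have h2 : pe j ∈ walkVerts (P j) (m j) := mem_walkVerts (le_refl (m j))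
      rw [← h] at h2
      exact (Set.disjoint_left.mp (hP2' i j hij)) h1 h2
    have hqe_inj : Function.Injective qe := by
      intro i j h
      by_contra hij
      have h1 : qe i ∈ walkVerts (Q2 i) (n2 i) := mem_walkVerts (Nat.zero_le (n2 i))
      have h2 : qe j ∈ walkVerts (Q2 j) (n2 j) := mem_walkVerts (Nat.zero_le (n2 j))
      rw [← h] at h2
      exact (Set.disjoint_left.mp (hQ2' i j hij)) h1 h2
    have hrange_card : ∀ (f : Fin k → V), Function.Injective f →
        (Set.range f).ncard = k := by
      intro f hf
      rw [← Set.image_univ, Set.ncard_image_of_injective _ hf, Set.ncard_univ,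
        Nat.card_eq_fintype_card, Fintype.card_fin]
    have hpe_range : Set.range pe = T := by
      apply Set.eq_of_subset_of_ncard_le
      · rintro v ⟨i, rfl⟩; exact hm_mem i
      · rw [hrange_card pe hpe_inj, hTcard]
      · exact Set.toFinite T
    have hqe_range : Set.range qe = T' := by
      apply Set.eq_of_subset_of_ncard_le
      · rintro v ⟨j, rfl⟩; exact hq0 j
      · rw [hrange_card qe hqe_inj, hT'card]
      · exact Set.toFinite T'
    -- the matching map
    set mu : V → V := fun v => if v = x then y else v with hmudef
    have hmu_mem : ∀ v ∈ T, mu v ∈ T' := by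
      intro v hv
      rw [hTdef] at hv
      rw [hT'def]
      rcases Set.mem_insert_iff.mp hv with hv' | hv'
      · show (if v = x then y else v) ∈ insert y Y
        rw [if_pos hv']
        exact Set.mem_insert _ _
      · have hvx : v ≠ x := fun h => hxY (h ▸ hv')
        show (if v = x then y else v) ∈ insert y Y
        rw [if_neg hvx]
        exact Set.mem_insert_iff.mpr (Or.inr hv')
    have hmu_inj : ∀ a ∈ T, ∀ b ∈ T, mu a = mu b → a = b := by
      intro a ha b hb h
      rw [hTdef] at ha hb
      have h' : (if a = x then y else a) = (if b = x then y else b) := h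
      rcases Set.mem_insert_iff.mp ha with ha' | ha' <;>
        rcases Set.mem_insert_iff.mp hb with hb' | hb'
      · rw [ha', hb']
      · exfalso
        have hbx : b ≠ x := fun hh => hxY (hh ▸ hb')
        rw [if_pos ha', if_neg hbx] at h'
        exact hyY (by rw [h']; exact hb')
      · exfalso
        have hax : a ≠ x := fun hh => hxY (hh ▸ ha')
        rw [if_neg hax, if_pos hb'] at h'
        exact hyY (by rw [← h']; exact ha')
      · have hax : a ≠ x := fun hh => hxY (hh ▸ ha')
        have hbx : b ≠ x := fun hh => hxY (hh ▸ hb')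
        rwa [if_neg hax, if_neg hbx] at h'
    have hsigex : ∀ i : Fin k, ∃ j : Fin k, qe j = mu (pe i) := by
      intro i
      have h1 : mu (pe i) ∈ T' := hmu_mem _ (hm_mem i)
      rw [← hqe_range] at h1
      obtain ⟨j, hj⟩ := h1
      exact ⟨j, hj⟩
    set sig : Fin k → Fin k := fun i => (hsigex i).choose with hsigdef
    have hsig : ∀ i, qe (sig i) = mu (pe i) := fun i => (hsigex i).choose_spec
    have hsig_inj : Function.Injective sig := by
      intro i j h
      apply hpe_inj
      apply hmu_inj _ (hm_mem i) _ (hm_mem j)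
      rw [← hsig i, ← hsig j, h]
    -- Claim C: crossing intersections
    have hYw : ∀ (w : ℕ → V) (n : ℕ), IsWalkOn R' w n → w 0 ∈ A → w n ∈ B →
        ∃ i ≤ n, w i ∈ Y := fun w n => hYsep.walk
    have hC : ∀ (i j : Fin k) (v : V), v ∈ walkVerts (P i) (m i) →
        v ∈ walkVerts (Q2 j) (n2 j) → v = pe i ∧ v = qe j ∧ v ∈ Y := by
      rintro i j v ⟨s, hs, rfl⟩ ⟨t, ht, htv⟩
      have hw1 : IsWalkOn R' (P i) s := fun r hr => (hPpath i).1 r (by omega)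
      have hw2 : IsWalkOn R' (fun r => Q2 j (r + t)) (n2 j - t) := by
        intro r hr
        have := (hQpath j).1 (r + t) (by omega)
        simpa [show r + 1 + t = r + t + 1 by omega] using this
      have hjoin : (fun r => Q2 j (r + t)) 0 = P i s := by
        simp only []
        rw [show 0 + t = t by omega]
        exact htv
      have hwalk := catW_walk hw1 hw2 hjoin
      have hstart : catW (P i) s (fun r => Q2 j (r + t)) 0 ∈ A := by
        rw [catW_zero]; exact (hP1 i).2.1
      have hend : catW (P i) s (fun r => Q2 j (r + t)) (s + (n2 j - t)) ∈ B := by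
        rw [catW_last hjoin]
        show Q2 j (n2 j - t + t) ∈ B
        rw [show n2 j - t + t = n2 j by omega]
        exact hqB j
      obtain ⟨r, hr, hrY⟩ := hYw _ _ hwalk hstart hend
      by_cases hrs : r ≤ s
      · have hrv : P i r ∈ Y := by
          rwa [show catW (P i) s (fun r => Q2 j (r + t)) r = P i r by
            simp [catW, hrs]] at hrY
        have hrT : P i r ∈ T := Or.inr hrv
        have hrm : ¬ r < m i := fun h => hm_min i r h hrT
        have hsm : s = m i := by omega
        have hvy : P i s ∈ Y := by rw [hsm, show m i = r by omega]; exact hrv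
        have ht0' : t = 0 := by
          by_contra h
          exact hq_after j t (by omega) ht
            (Set.mem_insert_iff.mpr (Or.inr (show Q2 j t ∈ Y by rw [htv]; exact hvy)))
        refine ⟨by rw [hsm], ?_, hvy⟩
        rw [← htv, ht0']
      · exfalso
        have hrv : Q2 j (r - s + t) ∈ Y := by
          rwa [show catW (P i) s (fun r => Q2 j (r + t)) r = Q2 j (r - s + t) by
            simp only [catW, if_neg hrs]] at hrY
        exact hq_after j (r - s + t) (by omega) (by omega)
          (Set.mem_insert_iff.mpr (Or.inr hrv))
    -- build the k combined paths
    have main : ∀ i : Fin k, ∃ (w : ℕ → V) (n : ℕ), IsPathOn R w n ∧ w 0 ∈ A ∧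
        w n ∈ B ∧ walkVerts w n ⊆
          walkVerts (P i) (m i) ∪ walkVerts (Q2 (sig i)) (n2 (sig i)) := by
      intro i
      have hPwalkR : IsWalkOn R (P i) (m i) := fun t ht => ((hPpath i).1 t ht).1
      have hQwalkR : IsWalkOn R (Q2 (sig i)) (n2 (sig i)) :=
        fun t ht => ((hQpath (sig i)).1 t ht).1
      by_cases hx : pe i = x
      · have hmux : mu x = y := by show (if x = x then y else x) = y; rw [if_pos rfl]
        have hq : qe (sig i) = y := by rw [hsig i, hx, hmux]
        have hcons : IsWalkOn R (consW x (Q2 (sig i))) (n2 (sig i) + 1) := by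
          apply consW_walk _ hQwalkR
          rw [show Q2 (sig i) 0 = y from hq]
          exact hRxy
        have hjoin : consW x (Q2 (sig i)) 0 = P i (m i) := by
          rw [consW_zero, ← hx]
        have hwalk := catW_walk hPwalkR hcons hjoin
        obtain ⟨w', n', hp, h0, hl, hsub⟩ := walk_to_path _ _ hwalk
        refine ⟨w', n', hp, ?_, ?_, ?_⟩
        · rw [h0, catW_zero]; exact (hP1 i).2.1
        · rw [hl, catW_last hjoin, consW_succ]; exact hqB (sig i)
        · refine hsub.trans (Set.Subset.trans catW_verts ?_)
          intro v hv
          rcases hv with hv | hv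
          · exact Or.inl hv
          · rcases Set.mem_insert_iff.mp (consW_verts hv) with hv | hv
            · exact Or.inl (by rw [hv, ← hx]; exact mem_walkVerts (le_refl (m i)))
            · exact Or.inr hv
      · have hpeY : pe i ∈ Y := by
          rcases Set.mem_insert_iff.mp (hm_mem i) with h | h
          · exact absurd h hx
          · exact h
        have hmup : mu (pe i) = pe i := by
          show (if pe i = x then y else pe i) = pe i
          rw [if_neg hx]
        have hq : qe (sig i) = pe i := by rw [hsig i, hmup]
        have hjoin : Q2 (sig i) 0 = P i (m i) := hq
        have hwalk := catW_walk hPwalkR hQwalkR hjoin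
        obtain ⟨w', n', hp, h0, hl, hsub⟩ := walk_to_path _ _ hwalk
        refine ⟨w', n', hp, ?_, ?_, ?_⟩
        · rw [h0, catW_zero]; exact (hP1 i).2.1
        · rw [hl, catW_last hjoin]; exact hqB (sig i)
        · exact hsub.trans catW_verts
    choose Pf lenf hPf using main
    refine ⟨Pf, lenf, fun i => ⟨(hPf i).1, (hPf i).2.1, (hPf i).2.2.1⟩, ?_⟩
    intro i j hij
    apply Disjoint.mono (hPf i).2.2.2 (hPf j).2.2.2
    rw [Set.disjoint_left]
    rintro v (hv1 | hv1) (hv2 | hv2)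
    · exact Set.disjoint_left.mp (hP2' i j hij) hv1 hv2
    · obtain ⟨h1, h2, h3⟩ := hC i (sig j) v hv1 hv2
      have hpeiY : pe i ∈ Y := h1 ▸ h3
      have hx' : pe i ≠ x := fun h => hxY (h ▸ hpeiY)
      have e1 : mu (pe i) = pe i := by simp [hmudef, hx']
      have e2 : mu (pe j) = qe (sig j) := (hsig j).symm
      exact hij (hpe_inj (hmu_inj _ (hm_mem i) _ (hm_mem j)
        (by rw [e1, e2, ← h2, ← h1])))
    · obtain ⟨h1, h2, h3⟩ := hC j (sig i) v hv2 hv1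
      have hpejY : pe j ∈ Y := h1 ▸ h3
      have hx' : pe j ≠ x := fun h => hxY (h ▸ hpejY)
      have e1 : mu (pe j) = pe j := by simp [hmudef, hx']
      have e2 : mu (pe i) = qe (sig i) := (hsig i).symm
      exact hij (hpe_inj (hmu_inj _ (hm_mem i) _ (hm_mem j)
        (by rw [e1, e2, ← h2, ← h1])))
    · exact Set.disjoint_left.mp (hQ2' (sig i) (sig j)
        (fun h => hij (hsig_inj h))) hv1 hv2

end MengerCore

/-- Menger's theorem for digraphs. -/
theorem menger_digraph [Fintype V] (R : V → V → Prop) (k : ℕ) (hk : 0 < k)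
    (A B : Set V) :
    (∃ (P : Fin k → ℕ → V) (len : Fin k → ℕ),
       (∀ i, IsPathOn R (P i) (len i) ∧ P i 0 ∈ A ∧ P i (len i) ∈ B) ∧
       ∀ i j, i ≠ j → Disjoint (walkVerts (P i) (len i)) (walkVerts (P j) (len j))) ∨
    (∃ S : Set V, S.Finite ∧ S.ncard < k ∧
       ∀ (w : ℕ → V) (n : ℕ), IsPathOn R w n → w 0 ∈ A → w n ∈ B →
         ∃ i ≤ n, w i ∈ S) := by
  classical
  by_cases h : ∃ S : Set V,
      (∀ (w : ℕ → V) (n : ℕ), IsPathOn R w n → w 0 ∈ A → w n ∈ B →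
        ∃ i ≤ n, w i ∈ S) ∧ S.ncard < k
  · obtain ⟨S, hS, hlt⟩ := h
    exact Or.inr ⟨S, Set.toFinite S, hlt, hS⟩
  · push_neg at h
    left
    obtain ⟨P, len, h1, h2⟩ := menger_core (edgeCard R) R A B k le_rfl
      (fun S hS => h S hS)
    exact ⟨P, len, h1, h2⟩
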